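/- In the setting of the abstract Balian–Low theorem, if φ_0 ∈ V ∩ D(𝔛) ∩ D(𝔓) generates an orthonormal Gabor frame {T_{m,n}φ_0}, then ⟨𝔛φ_0, 𝔓φ_0⟩ = ⟨𝔓φ_0, 𝔛φ_0⟩, i.e., the inner product ⟨𝔛φ_0, 𝔓φ_0⟩ is real. -/

import Mathlib

open Filter Topology

local notation "⟪" x ", " y "⟫" => @inner ℂ _ _ x y

/-- The Weyl operator `T(z) = e^{i z₁ z₂ /2} e^{i z₁ 𝔛} e^{i z₂ 𝔓}` associated
to the unitary groups `U t = e^{it𝔛}`, `V s = e^{is𝔓}`, for `z ∈ ℝ² ≅ ℂ`. -/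
noncomputable def weylOpR2 {H : Type*} [NormedAddCommGroup H] [NormedSpace ℂ H]
    (U V : ℝ → H →L[ℂ] H) (w : ℝ × ℝ) : H →L[ℂ] H :=
  Complex.exp (Complex.I * w.1 * w.2 / 2) • (U w.1 * V w.2)

/-- The operators `T_{m,n} = T(a)^m T(b)^n` of the generalized Gabor frame
associated to the lattice generated by `a, b ∈ ℝ²` (along a fixed ray the
projective phases cancel, so `T(a)^m = T(m·a)`). -/
noncomputable def gaborOp {H : Type*} [NormedAddCommGroup H] [NormedSpace ℂ H]
    (U V : ℝ → H →L[ℂ] H) (a b : ℝ × ℝ) (m n : ℤ) : H →L[ℂ] H :=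
  weylOpR2 U V ((m : ℝ) • a) * weylOpR2 U V ((n : ℝ) • b)

section Aux

variable {H : Type*} [NormedAddCommGroup H] [InnerProductSpace ℂ H]
variable (U V : ℝ → H →L[ℂ] H)

lemma weyl_apply (w : ℝ × ℝ) (x : H) :
    weylOpR2 U V w x = Complex.exp (Complex.I * w.1 * w.2 / 2) • U w.1 (V w.2 x) := by
  simp [weylOpR2]

lemma aux_swap (hWeyl : ∀ t s : ℝ, U t * V s = Complex.exp (-(Complex.I * t * s)) • (V s * U t))
    (t s : ℝ) (x : H) :
    V s (U t x) = Complex.exp (Complex.I * t * s) • U t (V s x) := by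
  have h := DFunLike.congr_fun (hWeyl t s) x
  simp only [ContinuousLinearMap.mul_apply, ContinuousLinearMap.smul_apply] at h
  rw [h, smul_smul, ← Complex.exp_add]
  simp

lemma aux_comm (hUgrp : ∀ t s : ℝ, U (t + s) = U t * U s) (t s : ℝ) (x : H) :
    U t (U s x) = U s (U t x) := by
  have h1 := DFunLike.congr_fun (hUgrp t s) x
  have h2 := DFunLike.congr_fun (hUgrp s t) x
  simp only [ContinuousLinearMap.mul_apply] at h1 h2
  rw [← h1, ← h2, add_comm]

lemma aux_adj (hUgrp : ∀ t s : ℝ, U (t + s) = U t * U s) (hU0 : U 0 = 1)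
    (hUnitU : ∀ (t : ℝ) (x : H), ‖U t x‖ = ‖x‖) (t : ℝ) (x y : H) :
    ⟪U t x, y⟫ = ⟪x, U (-t) y⟫ := by
  have hinv : U t (U (-t) y) = y := by
    have h := DFunLike.congr_fun (hUgrp t (-t)) y
    simp only [ContinuousLinearMap.mul_apply] at h
    rw [← h]
    simp [hU0]
  have h2 := LinearIsometry.inner_map_map
    (⟨(U t).toLinearMap, hUnitU t⟩ : H →ₗᵢ[ℂ] H) x (U (-t) y)
  calc ⟪U t x, y⟫ = ⟪U t x, U t (U (-t) y)⟫ := by rw [hinv]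
    _ = ⟪x, U (-t) y⟫ := h2

lemma aux_UW (hUgrp : ∀ t s : ℝ, U (t + s) = U t * U s)
    (hWeyl : ∀ t s : ℝ, U t * V s = Complex.exp (-(Complex.I * t * s)) • (V s * U t))
    (t : ℝ) (w : ℝ × ℝ) (x : H) :
    U t (weylOpR2 U V w x) = Complex.exp (-(Complex.I * t * w.2)) • weylOpR2 U V w (U t x) := by
  have hUV : U t (V w.2 x) = Complex.exp (-(Complex.I * t * w.2)) • V w.2 (U t x) := by
    have h := DFunLike.congr_fun (hWeyl t w.2) x
    simpa only [ContinuousLinearMap.mul_apply, ContinuousLinearMap.smul_apply] using h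
  rw [weyl_apply, weyl_apply, map_smul, aux_comm U hUgrp, hUV, map_smul, smul_smul, smul_smul]
  congr 1
  ring

lemma aux_VW (hVgrp : ∀ t s : ℝ, V (t + s) = V t * V s)
    (hWeyl : ∀ t s : ℝ, U t * V s = Complex.exp (-(Complex.I * t * s)) • (V s * U t))
    (s : ℝ) (w : ℝ × ℝ) (x : H) :
    V s (weylOpR2 U V w x) = Complex.exp (Complex.I * s * w.1) • weylOpR2 U V w (V s x) := by
  rw [weyl_apply, weyl_apply, map_smul, aux_swap U V hWeyl, aux_comm V hVgrp,
    smul_smul, smul_smul]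
  congr 1
  ring

lemma weyl_mul_apply (hUgrp : ∀ t s : ℝ, U (t + s) = U t * U s)
    (hVgrp : ∀ t s : ℝ, V (t + s) = V t * V s)
    (hWeyl : ∀ t s : ℝ, U t * V s = Complex.exp (-(Complex.I * t * s)) • (V s * U t))
    (w w' : ℝ × ℝ) (x : H) :
    weylOpR2 U V w (weylOpR2 U V w' x) =
      Complex.exp (Complex.I * (w'.1 * w.2 - w.1 * w'.2) / 2) • weylOpR2 U V (w + w') x := by
  have hVU : ∀ y : H, V w.2 (U w'.1 y) = Complex.exp (Complex.I * w'.1 * w.2) • U w'.1 (V w.2 y) :=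
    fun y => aux_swap U V hWeyl w'.1 w.2 y
  have hUU : ∀ y : H, U w.1 (U w'.1 y) = U (w.1 + w'.1) y := by
    intro y
    have h := DFunLike.congr_fun (hUgrp w.1 w'.1) y
    simp only [ContinuousLinearMap.mul_apply] at h
    exact h.symm
  have hVV : ∀ y : H, V w.2 (V w'.2 y) = V (w.2 + w'.2) y := by
    intro y
    have h := DFunLike.congr_fun (hVgrp w.2 w'.2) y
    simp only [ContinuousLinearMap.mul_apply] at h
    exact h.symm
  rw [weyl_apply, weyl_apply, weyl_apply, map_smul, map_smul, hVU, map_smul, hVV, hUU]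
  rw [smul_smul, smul_smul, smul_smul, Prod.fst_add, Prod.snd_add]
  congr 1
  rw [← Complex.exp_add, ← Complex.exp_add, ← Complex.exp_add]
  congr 1
  push_cast
  ring

lemma weyl_adj (hUgrp : ∀ t s : ℝ, U (t + s) = U t * U s)
    (hVgrp : ∀ t s : ℝ, V (t + s) = V t * V s)
    (hU0 : U 0 = 1) (hV0 : V 0 = 1)
    (hUnitU : ∀ (t : ℝ) (x : H), ‖U t x‖ = ‖x‖)
    (hUnitV : ∀ (s : ℝ) (x : H), ‖V s x‖ = ‖x‖)
    (hWeyl : ∀ t s : ℝ, U t * V s = Complex.exp (-(Complex.I * t * s)) • (V s * U t))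
    (w : ℝ × ℝ) (x y : H) :
    ⟪weylOpR2 U V w x, y⟫ = ⟪x, weylOpR2 U V (-w) y⟫ := by
  rw [weyl_apply, weyl_apply, inner_smul_left, inner_smul_right]
  rw [aux_adj U hUgrp hU0 hUnitU, aux_adj V hVgrp hV0 hUnitV]
  rw [aux_swap U V hWeyl, inner_smul_right]
  simp only [Prod.fst_neg, Prod.snd_neg, Complex.ofReal_neg]
  rw [← mul_assoc, ← Complex.exp_conj]
  congr 1
  rw [← Complex.exp_add]
  congr 1
  simp only [map_div₀, map_mul, Complex.conj_I, Complex.conj_ofReal, map_ofNat]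
  ring

lemma keyD (hUgrp : ∀ t s : ℝ, U (t + s) = U t * U s) (hU0 : U 0 = 1)
    (hUnitU : ∀ (t : ℝ) (x : H), ‖U t x‖ = ‖x‖)
    (φ₀ ξ : H) (hder : HasDerivAt (fun s : ℝ => U s φ₀) (Complex.I • ξ) 0)
    (A : H →L[ℂ] H) (γ : ℝ)
    (hcomm : ∀ (t : ℝ) (x : H), U t (A x) = Complex.exp (Complex.I * t * γ) • A (U t x)) :
    ⟪A φ₀, ξ⟫ = (γ : ℂ) * ⟪A φ₀, φ₀⟫ + ⟪A ξ, φ₀⟫ := by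
  have hneg : HasDerivAt (fun t : ℝ => U (-t) φ₀) (-(Complex.I • ξ)) 0 := by
    have hder' : HasDerivAt (fun s : ℝ => U s φ₀) (Complex.I • ξ) (-0 : ℝ) := by
      simpa using hder
    have h := HasDerivAt.scomp (𝕜 := ℝ) (x := (0:ℝ)) (hg := hder') (hh := hasDerivAt_neg (0:ℝ))
    simpa [Function.comp_def] using h
  have hAneg : HasDerivAt (fun t : ℝ => A (U (-t) φ₀)) (A (-(Complex.I • ξ))) 0 := by
    have h := ((A.restrictScalars ℝ).hasFDerivAt (x := U (-(0:ℝ)) φ₀)).comp_hasDerivAt 0 hneg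
    exact h
  have hg : HasDerivAt (fun t : ℝ => ⟪A (U (-t) φ₀), φ₀⟫) (Complex.I * ⟪A ξ, φ₀⟫) 0 := by
    have h := HasDerivAt.inner ℂ hAneg (hasDerivAt_const (0:ℝ) φ₀)
    simpa [inner_smul_left, Complex.conj_I] using h
  have h1 : HasDerivAt (fun t : ℝ => (Complex.I * t * γ : ℂ)) (Complex.I * γ) 0 := by
    simpa using ((Complex.ofRealCLM.hasDerivAt (x := (0:ℝ))).const_mul Complex.I).mul_const (γ:ℂ)
  have hexp : HasDerivAt (fun t : ℝ => Complex.exp (Complex.I * t * γ)) (Complex.I * γ) 0 := by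
    have h := h1.cexp
    simpa using h
  have hfull : HasDerivAt
      (fun t : ℝ => Complex.exp (Complex.I * t * γ) * ⟪A (U (-t) φ₀), φ₀⟫)
      (Complex.I * γ * ⟪A φ₀, φ₀⟫ + Complex.I * ⟪A ξ, φ₀⟫) 0 := by
    have h := hexp.mul hg
    simpa [hU0, Pi.mul_def] using h
  have hlhs : HasDerivAt (fun t : ℝ => ⟪A φ₀, U t φ₀⟫) (Complex.I * ⟪A φ₀, ξ⟫) 0 := by
    have h := HasDerivAt.inner ℂ (hasDerivAt_const (0:ℝ) (A φ₀)) hder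
    simpa [inner_smul_right] using h
  have hfun : ∀ t : ℝ, ⟪A φ₀, U t φ₀⟫
      = Complex.exp (Complex.I * t * γ) * ⟪A (U (-t) φ₀), φ₀⟫ := by
    intro t
    have h2 := aux_adj U hUgrp hU0 hUnitU (-t) (A φ₀) φ₀
    rw [neg_neg] at h2
    rw [← h2, hcomm, inner_smul_left, ← Complex.exp_conj]
    congr 2
    simp only [map_mul, Complex.conj_I, Complex.conj_ofReal]
    push_cast
    ring
  have hlhs' : HasDerivAt
      (fun t : ℝ => Complex.exp (Complex.I * t * γ) * ⟪A (U (-t) φ₀), φ₀⟫)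
      (Complex.I * ⟪A φ₀, ξ⟫) 0 := by
    simpa only [hfun] using hlhs
  have huniq := hlhs'.unique hfull
  have hI : (Complex.I : ℂ) ≠ 0 := Complex.I_ne_zero
  apply mul_left_cancel₀ hI
  rw [huniq]
  ring

end Aux

/-- in the setting of the abstract Balian–Low theorem, if
`φ₀ ∈ V ∩ D(𝔛) ∩ D(𝔓)` generates an orthonormal Gabor frame `{T_{m,n} φ₀}`
for the closed invariant subspace `S`, then
`⟪𝔛φ₀, 𝔓φ₀⟫ = ⟪𝔓φ₀, 𝔛φ₀⟫`, i.e. the inner product `⟪𝔛φ₀, 𝔓φ₀⟫` is real. -/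
theorem gabor_generator_inner_product_real
    {H : Type*} [NormedAddCommGroup H] [InnerProductSpace ℂ H] [CompleteSpace H]
    (X P : H →ₗ.[ℂ] H) (hXsa : IsSelfAdjoint X) (hPsa : IsSelfAdjoint P)
    (U V : ℝ → H →L[ℂ] H)
    (hUgrp : ∀ t s : ℝ, U (t + s) = U t * U s)
    (hVgrp : ∀ t s : ℝ, V (t + s) = V t * V s)
    (hU0 : U 0 = 1) (hV0 : V 0 = 1)
    (hUnitU : ∀ (t : ℝ) (x : H), ‖U t x‖ = ‖x‖)
    (hUnitV : ∀ (s : ℝ) (x : H), ‖V s x‖ = ‖x‖)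
    (hUgen : ∀ (ψ : X.domain) (t : ℝ),
      HasDerivAt (fun s : ℝ => U s (ψ : H)) (U t (Complex.I • X ψ)) t)
    (hVgen : ∀ (ψ : P.domain) (t : ℝ),
      HasDerivAt (fun s : ℝ => V s (ψ : H)) (V t (Complex.I • P ψ)) t)
    (hWeyl : ∀ t s : ℝ, U t * V s = Complex.exp (-(Complex.I * t * s)) • (V s * U t))
    (C : Submodule ℂ H) (hCX : C ≤ X.domain) (hCP : C ≤ P.domain)
    (hcore : ∀ (ψ : H) (hx : ψ ∈ X.domain) (hp : ψ ∈ P.domain),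
      ∃ ξ : ℕ → C,
        Tendsto (fun i => (ξ i : H)) atTop (𝓝 ψ) ∧
        Tendsto (fun i => X ⟨(ξ i : H), hCX (ξ i).2⟩) atTop (𝓝 (X ⟨ψ, hx⟩)) ∧
        Tendsto (fun i => P ⟨(ξ i : H), hCP (ξ i).2⟩) atTop (𝓝 (P ⟨ψ, hp⟩)))
    -- the lattice `Γ` is generated by linearly independent `a, b ∈ ℝ²`:
    (a b : ℝ × ℝ) (hab : LinearIndependent ℝ ![a, b])
    -- `S` is a closed subspace invariant under the unitary groups:
    (S : Submodule ℂ H) (hSclosed : IsClosed (S : Set H))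
    (hSinv : ∀ (s : ℝ) (ψ : H), ψ ∈ S → U s ψ ∈ S ∧ V s ψ ∈ S)
    -- `{T_{m,n} φ₀}` is a complete orthonormal system for `S`:
    (φ₀ : H) (hφ₀S : φ₀ ∈ S)
    (horth : ∀ m n m' n' : ℤ,
      ⟪gaborOp U V a b m n φ₀, gaborOp U V a b m' n' φ₀⟫ =
        if m = m' ∧ n = n' then (1 : ℂ) else 0)
    (hcomplete : ∀ ψ ∈ S, (∀ m n : ℤ, ⟪gaborOp U V a b m n φ₀, ψ⟫ = 0) → ψ = 0)
    -- `φ₀` belongs to both domains: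
    (hx : φ₀ ∈ X.domain) (hp : φ₀ ∈ P.domain) :
    ⟪X ⟨φ₀, hx⟩, P ⟨φ₀, hp⟩⟫ = ⟪P ⟨φ₀, hp⟩, X ⟨φ₀, hx⟩⟫ := by
  classical
  set ξX := X ⟨φ₀, hx⟩ with hξX
  set ξP := P ⟨φ₀, hp⟩ with hξP
  have hderX : HasDerivAt (fun s : ℝ => U s φ₀) (Complex.I • ξX) 0 := by
    have h := hUgen ⟨φ₀, hx⟩ 0
    simpa [hU0] using h
  have hderP : HasDerivAt (fun s : ℝ => V s φ₀) (Complex.I • ξP) 0 := by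
    have h := hVgen ⟨φ₀, hp⟩ 0
    simpa [hV0] using h
  -- membership of the generator images in S
  have hmem : ∀ (W : ℝ → H →L[ℂ] H) (ξ : H), (∀ (t : ℝ) (ψ : H), ψ ∈ S → W t ψ ∈ S) →
      HasDerivAt (fun s : ℝ => W s φ₀) (Complex.I • ξ) 0 → ξ ∈ S := by
    intro W ξ hinvW hder
    have hslope := hasDerivAt_iff_tendsto_slope.1 hder
    have hmemI : Complex.I • ξ ∈ S := by
      refine hSclosed.mem_of_tendsto hslope (Filter.Eventually.of_forall fun t => ?_)
      show slope (fun s : ℝ => W s φ₀) 0 t ∈ S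
      rw [slope_def_module]
      exact Submodule.smul_of_tower_mem S _
        (Submodule.sub_mem S (hinvW t φ₀ hφ₀S) (hinvW 0 φ₀ hφ₀S))
    have hξeq : ξ = (-Complex.I) • (Complex.I • ξ) := by
      rw [smul_smul]; simp
    rw [hξeq]
    exact Submodule.smul_mem S _ hmemI
  have hXS : ξX ∈ S := hmem U ξX (fun t ψ h => (hSinv t ψ h).1) hderX
  have hPS : ξP ∈ S := hmem V ξP (fun t ψ h => (hSinv t ψ h).2) hderP
  -- the Gabor system
  set E : ℤ × ℤ → H :=
    fun p => weylOpR2 U V ((p.1 : ℝ) • a) (weylOpR2 U V ((p.2 : ℝ) • b) φ₀) with hE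
  have hgE : ∀ m n : ℤ, gaborOp U V a b m n φ₀ = E (m, n) := fun m n => rfl
  have hWmem : ∀ (w : ℝ × ℝ) (ψ : H), ψ ∈ S → weylOpR2 U V w ψ ∈ S := by
    intro w ψ hψ
    rw [weyl_apply]
    exact Submodule.smul_mem S _ ((hSinv w.1 _ ((hSinv w.2 ψ hψ).2)).1)
  have heS : ∀ p : ℤ × ℤ, E p ∈ S := fun p => hWmem _ _ (hWmem _ _ hφ₀S)
  have hE00 : E (0, 0) = φ₀ := by
    rw [hE]
    simp [weyl_apply, hU0, hV0]
  have hδ : ∀ p : ℤ × ℤ, ⟪E p, φ₀⟫ = if p = (0, 0) then 1 else 0 := by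
    intro p
    have h := horth p.1 p.2 0 0
    rw [hgE p.1 p.2, hgE 0 0, hE00] at h
    simpa [Prod.ext_iff] using h
  -- commutation of gaborOp with the unitary groups
  have hcommX : ∀ (p : ℤ × ℤ) (t : ℝ) (x : H),
      U t (gaborOp U V a b p.1 p.2 x)
        = Complex.exp (Complex.I * t * ((-((p.1 : ℝ) * a.2 + (p.2 : ℝ) * b.2) : ℝ) : ℂ)) •
          gaborOp U V a b p.1 p.2 (U t x) := by
    intro p t x
    simp only [gaborOp, ContinuousLinearMap.mul_apply]
    rw [aux_UW U V hUgrp hWeyl, aux_UW U V hUgrp hWeyl, map_smul, smul_smul, ← Complex.exp_add]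
    congr 2
    simp only [Prod.smul_snd, smul_eq_mul]
    push_cast
    ring
  have hcommP : ∀ (p : ℤ × ℤ) (s : ℝ) (x : H),
      V s (gaborOp U V a b p.1 p.2 x)
        = Complex.exp (Complex.I * s * (((p.1 : ℝ) * a.1 + (p.2 : ℝ) * b.1 : ℝ) : ℂ)) •
          gaborOp U V a b p.1 p.2 (V s x) := by
    intro p s x
    simp only [gaborOp, ContinuousLinearMap.mul_apply]
    rw [aux_VW U V hVgrp hWeyl, aux_VW U V hVgrp hWeyl, map_smul, smul_smul, ← Complex.exp_add]
    congr 2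
    simp only [Prod.smul_fst, smul_eq_mul]
    push_cast
    ring
  -- the basic coefficient identities coming from differentiating matrix elements
  have RcA : ∀ p : ℤ × ℤ, ⟪E p, ξX⟫
      = ((-((p.1 : ℝ) * a.2 + (p.2 : ℝ) * b.2) : ℝ) : ℂ) * ⟪E p, φ₀⟫
        + ⟪gaborOp U V a b p.1 p.2 ξX, φ₀⟫ :=
    fun p => keyD U hUgrp hU0 hUnitU φ₀ ξX hderX (gaborOp U V a b p.1 p.2) _ (hcommX p)
  have RdA : ∀ p : ℤ × ℤ, ⟪E p, ξP⟫
      = ((((p.1 : ℝ) * a.1 + (p.2 : ℝ) * b.1) : ℝ) : ℂ) * ⟪E p, φ₀⟫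
        + ⟪gaborOp U V a b p.1 p.2 ξP, φ₀⟫ :=
    fun p => keyD V hVgrp hV0 hUnitV φ₀ ξP hderP (gaborOp U V a b p.1 p.2) _ (hcommP p)
  have hγδ : ∀ (γ : ℝ) (p : ℤ × ℤ), (p = (0,0) → γ = 0) → (γ : ℂ) * ⟪E p, φ₀⟫ = 0 := by
    intro γ p h0
    by_cases hp0 : p = (0, 0)
    · rw [h0 hp0]; simp
    · rw [hδ p, if_neg hp0, mul_zero]
  -- the adjoint identity for the Gabor operators
  have hadjT : ∀ (p : ℤ × ℤ) (x : H), ⟪gaborOp U V a b p.1 p.2 x, φ₀⟫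
      = Complex.exp (Complex.I * (((p.1 : ℝ) * (p.2 : ℝ) * (a.1 * b.2 - b.1 * a.2) : ℝ) : ℂ))
        * ⟪x, E (-p)⟫ := by
    intro p x
    simp only [gaborOp, ContinuousLinearMap.mul_apply]
    rw [weyl_adj U V hUgrp hVgrp hU0 hV0 hUnitU hUnitV hWeyl,
        weyl_adj U V hUgrp hVgrp hU0 hV0 hUnitU hUnitV hWeyl,
        weyl_mul_apply U V hUgrp hVgrp hWeyl]
    have hE' : E (-p) = weylOpR2 U V (-((p.1 : ℝ) • a)) (weylOpR2 U V (-((p.2 : ℝ) • b)) φ₀) := by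
      rw [hE]
      simp [neg_smul]
    rw [hE', weyl_mul_apply U V hUgrp hVgrp hWeyl, inner_smul_right, inner_smul_right,
      ← mul_assoc, ← Complex.exp_add, add_comm (-((p.2 : ℝ) • b)) (-((p.1 : ℝ) • a))]
    congr 2
    simp only [Prod.smul_fst, Prod.smul_snd, Prod.fst_neg, Prod.snd_neg, smul_eq_mul]
    push_cast
    ring
  -- the symmetry relations for the Gabor coefficients
  have Rc : ∀ p : ℤ × ℤ, ⟪E p, ξX⟫
      = Complex.exp (Complex.I * (((p.1 : ℝ) * (p.2 : ℝ) * (a.1 * b.2 - b.1 * a.2) : ℝ) : ℂ))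
        * ⟪ξX, E (-p)⟫ := by
    intro p
    rw [RcA p, hγδ _ p (by rintro rfl; simp), zero_add, hadjT p ξX]
  have Rd : ∀ p : ℤ × ℤ, ⟪E p, ξP⟫
      = Complex.exp (Complex.I * (((p.1 : ℝ) * (p.2 : ℝ) * (a.1 * b.2 - b.1 * a.2) : ℝ) : ℂ))
        * ⟪ξP, E (-p)⟫ := by
    intro p
    rw [RdA p, hγδ _ p (by rintro rfl; simp), zero_add, hadjT p ξP]
  -- Hilbert basis of S
  haveI : CompleteSpace S := hSclosed.completeSpace_coe
  set v : ℤ × ℤ → S := fun p => ⟨E p, heS p⟩ with hv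
  have hon : Orthonormal ℂ v := by
    rw [orthonormal_iff_ite]
    intro p q
    have h := horth p.1 p.2 q.1 q.2
    rw [hgE p.1 p.2, hgE q.1 q.2] at h
    rw [Submodule.coe_inner]
    simpa [Prod.ext_iff] using h
  have hbot : (Submodule.span ℂ (Set.range v))ᗮ = ⊥ := by
    rw [Submodule.eq_bot_iff]
    intro z hz
    have hz' : ∀ p : ℤ × ℤ, ⟪(v p : H), (z : H)⟫ = 0 := by
      intro p
      have h := (Submodule.mem_orthogonal _ _).1 hz (v p) (Submodule.subset_span ⟨p, rfl⟩)
      rw [Submodule.coe_inner] at h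
      exact h
    have hz0 : (z : H) = 0 := by
      refine hcomplete (z : H) z.2 fun m n => ?_
      rw [hgE m n]
      exact hz' (m, n)
    exact Subtype.ext hz0
  set bH : HilbertBasis (ℤ × ℤ) ℂ S := HilbertBasis.mkOfOrthogonalEqBot hon hbot with hbH
  have hb : ⇑bH = v := HilbertBasis.coe_mkOfOrthogonalEqBot hon hbot
  have hParse : ∀ (x y : H) (hxS : x ∈ S) (hyS : y ∈ S),
      ⟪x, y⟫ = ∑' p : ℤ × ℤ, ⟪x, E p⟫ * ⟪E p, y⟫ := by
    intro x y hxS hyS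
    have h := bH.tsum_inner_mul_inner ⟨x, hxS⟩ ⟨y, hyS⟩
    have h2 : (⟪(⟨x, hxS⟩ : S), (⟨y, hyS⟩ : S)⟫ : ℂ) = ⟪x, y⟫ := Submodule.coe_inner S _ _
    rw [← h2, ← h]
    refine tsum_congr fun p => ?_
    rw [hb]
    rw [Submodule.coe_inner, Submodule.coe_inner]
  -- conclude via the Parseval expansions and the reindexing p ↦ -p
  rw [hParse ξX ξP hXS hPS, hParse ξP ξX hPS hXS]
  rw [← Equiv.tsum_eq (Equiv.neg (ℤ × ℤ)) (fun p => ⟪ξP, E p⟫ * ⟪E p, ξX⟫)]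
  refine tsum_congr fun p => ?_
  have hphase : (starRingEnd ℂ)
        (Complex.exp (Complex.I * (((p.1 : ℝ) * (p.2 : ℝ) * (a.1 * b.2 - b.1 * a.2) : ℝ) : ℂ)))
      * Complex.exp (Complex.I * (((p.1 : ℝ) * (p.2 : ℝ) * (a.1 * b.2 - b.1 * a.2) : ℝ) : ℂ))
      = 1 := by
    rw [← Complex.exp_conj, ← Complex.exp_add]
    simp only [map_mul, Complex.conj_I, Complex.conj_ofReal]
    ring_nf
    exact Complex.exp_zero
  have h1 : ⟪ξX, E p⟫ = (starRingEnd ℂ) ⟪E p, ξX⟫ := (inner_conj_symm _ _).symm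
  have h2 : Equiv.neg (ℤ × ℤ) p = -p := rfl
  calc ⟪ξX, E p⟫ * ⟪E p, ξP⟫
      = (starRingEnd ℂ) ⟪E p, ξX⟫ * ⟪E p, ξP⟫ := by rw [h1]
    _ = ((starRingEnd ℂ)
          (Complex.exp (Complex.I * (((p.1 : ℝ) * (p.2 : ℝ) * (a.1 * b.2 - b.1 * a.2) : ℝ) : ℂ)))
          * ⟪E (-p), ξX⟫)
        * (Complex.exp (Complex.I * (((p.1 : ℝ) * (p.2 : ℝ) * (a.1 * b.2 - b.1 * a.2) : ℝ) : ℂ))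
          * ⟪ξP, E (-p)⟫) := by
        rw [Rc p, Rd p, map_mul, inner_conj_symm]
    _ = ((starRingEnd ℂ)
          (Complex.exp (Complex.I * (((p.1 : ℝ) * (p.2 : ℝ) * (a.1 * b.2 - b.1 * a.2) : ℝ) : ℂ)))
          * Complex.exp (Complex.I * (((p.1 : ℝ) * (p.2 : ℝ) * (a.1 * b.2 - b.1 * a.2) : ℝ) : ℂ)))
        * (⟪ξP, E (-p)⟫ * ⟪E (-p), ξX⟫) := by ring
    _ = ⟪ξP, E (-p)⟫ * ⟪E (-p), ξX⟫ := by rw [hphase, one_mul]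
    _ = ⟪ξP, E (Equiv.neg (ℤ × ℤ) p)⟫ * ⟪E (Equiv.neg (ℤ × ℤ) p), ξX⟫ := by rw [h2]
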